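/- There exist absolute constants c₁ > 0 and c₂ > 0 such that for every integer E ≥ 1, every toral eigenfunction f with frequency E and every z ∈ ℝ² with f(z) = 0, one has ℋ¹({x ∈ B(z, c₁/√E) : f(x) = 0}) ≥ c₂/√E. -/

import Mathlib

open MeasureTheory Metric

set_option maxHeartbeats 1000000

noncomputable section

/-- The set of lattice points on the circle of radius `√E`. -/
def latticeE (E : ℕ) : Finset (ℤ × ℤ) :=
  ((Finset.Icc (-(E : ℤ)) (E : ℤ)) ×ˢ (Finset.Icc (-(E : ℤ)) (E : ℤ))).filter
    (fun ξ => ξ.1 ^ 2 + ξ.2 ^ 2 = (E : ℤ))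

/-- A toral eigenfunction with frequency `E`: a real-valued trigonometric polynomial
`f(x) = ∑_{‖ξ‖² = E} a_ξ e^{2πi⟨ξ,x⟩}` with `a_{-ξ} = conj (a_ξ)` and not all
coefficients zero. -/
def IsToralEigenfunction (E : ℕ) (f : EuclideanSpace ℝ (Fin 2) → ℝ) : Prop :=
  ∃ a : ℤ × ℤ → ℂ,
    (∀ ξ : ℤ × ℤ, a (-ξ) = starRingEnd ℂ (a ξ)) ∧
    (∃ ξ ∈ latticeE E, a ξ ≠ 0) ∧
    ∀ x : EuclideanSpace ℝ (Fin 2),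
      (f x : ℂ) = ∑ ξ ∈ latticeE E,
        a ξ * Complex.exp (2 * Real.pi * Complex.I *
          ((ξ.1 : ℂ) * (x 0 : ℂ) + (ξ.2 : ℂ) * (x 1 : ℂ)))

/-- Rotation invariance of the circle integral: the integral of
`exp(i c (k₁ cos θ + k₂ sin θ))` over a full period depends only on `‖k‖`. -/
lemma circleIntegral_rot (c R : ℝ) (hR : 0 ≤ R) (k1 k2 : ℝ) (h : k1 ^ 2 + k2 ^ 2 = R ^ 2) :
    (∫ θ in (0:ℝ)..(2 * Real.pi), Complex.exp ((c : ℂ) * Complex.I *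
        ((k1 : ℂ) * (Real.cos θ : ℂ) + (k2 : ℂ) * (Real.sin θ : ℂ)))) =
    ∫ θ in (0:ℝ)..(2 * Real.pi),
      Complex.exp ((c : ℂ) * Complex.I * ((R : ℂ) * (Real.cos θ : ℂ))) := by
  obtain ⟨φ, h1, h2⟩ : ∃ φ, k1 = R * Real.cos φ ∧ k2 = R * Real.sin φ := by
    rcases eq_or_lt_of_le hR with hR0 | hR0
    · refine ⟨0, ?_, ?_⟩ <;> rw [← hR0] <;> nlinarith [sq_nonneg k1, sq_nonneg k2]
    · set w : ℂ := (k1 : ℂ) + (k2 : ℂ) * Complex.I with hw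
      have hre : w.re = k1 := by simp [hw]
      have him : w.im = k2 := by simp [hw]
      have habs : ‖w‖ = R := by
        rw [Complex.norm_def, Complex.normSq_apply, hre, him]
        rw [show k1 * k1 + k2 * k2 = R ^ 2 by nlinarith]
        exact Real.sqrt_sq hR
      have hw0 : w ≠ 0 := by
        intro h0
        rw [h0] at habs
        simp at habs
        exact hR0.ne' habs.symm
      refine ⟨Complex.arg w, ?_, ?_⟩
      · rw [Complex.cos_arg hw0, habs, hre]; field_simp
      · rw [Complex.sin_arg, habs, him]; field_simp
  have key : ∀ θ : ℝ, k1 * Real.cos θ + k2 * Real.sin θ = R * Real.cos (θ - φ) := by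
    intro θ; rw [h1, h2, Real.cos_sub]; ring
  have hper : Function.Periodic
      (fun θ : ℝ => Complex.exp ((c : ℂ) * Complex.I * ((R : ℂ) * (Real.cos θ : ℂ))))
      (2 * Real.pi) :=
    Real.cos_periodic.comp fun t : ℝ => Complex.exp ((c : ℂ) * Complex.I * ((R : ℂ) * (t : ℂ)))
  set g : ℝ → ℂ := fun θ : ℝ => Complex.exp ((c : ℂ) * Complex.I * ((R : ℂ) * (Real.cos θ : ℂ)))
    with hg
  have step1 : (∫ θ in (0:ℝ)..(2 * Real.pi), Complex.exp ((c : ℂ) * Complex.I *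
        ((k1 : ℂ) * (Real.cos θ : ℂ) + (k2 : ℂ) * (Real.sin θ : ℂ))))
      = ∫ θ in (0:ℝ)..(2 * Real.pi), g (θ - φ) := by
    apply intervalIntegral.integral_congr
    intro θ _
    simp only [hg]
    congr 1
    rw [show (k1 : ℂ) * (Real.cos θ : ℂ) + (k2 : ℂ) * (Real.sin θ : ℂ)
        = ((k1 * Real.cos θ + k2 * Real.sin θ : ℝ) : ℂ) by push_cast; ring, key θ]
    push_cast; ring
  have step2 : (∫ θ in (0:ℝ)..(2 * Real.pi), g (θ - φ))
      = ∫ θ in (0 - φ)..(2 * Real.pi - φ), g θ :=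
    intervalIntegral.integral_comp_sub_right g φ
  have step3 : (∫ θ in (0 - φ)..(2 * Real.pi - φ), g θ) = ∫ θ in (0:ℝ)..(2 * Real.pi), g θ := by
    rw [show (0:ℝ) - φ = -φ by ring, show 2 * Real.pi - φ = -φ + 2 * Real.pi by ring,
      hper.intervalIntegral_add_eq (-φ) 0, zero_add]
  rw [step1, step2, step3]

/-- A toral eigenfunction vanishing at `z` vanishes somewhere on every circle centred
at `z`, because its mean over any such circle is a multiple of `f z = 0` (all frequencies
have the same modulus). -/
lemma zero_on_circle (E : ℕ) (f : EuclideanSpace ℝ (Fin 2) → ℝ)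
    (hf : IsToralEigenfunction E f) (z : EuclideanSpace ℝ (Fin 2)) (hz : f z = 0)
    (s : ℝ) (hs : 0 < s) : ∃ x, dist x z = s ∧ f x = 0 := by
  obtain ⟨a, -, -, ha⟩ := hf
  set p : ℝ → EuclideanSpace ℝ (Fin 2) :=
    fun θ => WithLp.toLp 2 ![z 0 + s * Real.cos θ, z 1 + s * Real.sin θ] with hp
  have hp0 : ∀ θ, (p θ) 0 = z 0 + s * Real.cos θ := fun θ => rfl
  have hp1 : ∀ θ, (p θ) 1 = z 1 + s * Real.sin θ := fun θ => rfl
  have hdist : ∀ θ, dist (p θ) z = s := by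
    intro θ
    rw [EuclideanSpace.dist_eq, Fin.sum_univ_two, hp0, hp1]
    simp only [Real.dist_eq, sq_abs]
    have h1 : (z 0 + s * Real.cos θ - z 0) ^ 2 + (z 1 + s * Real.sin θ - z 1) ^ 2 = s ^ 2 := by
      have := Real.sin_sq_add_cos_sq θ; nlinarith
    rw [h1, Real.sqrt_sq hs.le]
  -- the complexified restriction to the circle
  set G : ℝ → ℂ := fun θ => ∑ ξ ∈ latticeE E,
      (a ξ * Complex.exp (2 * Real.pi * Complex.I *
        (((ξ.1 : ℝ) : ℂ) * ((z 0 : ℝ) : ℂ) + ((ξ.2 : ℝ) : ℂ) * ((z 1 : ℝ) : ℂ)))) *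
      Complex.exp (((2 * Real.pi * s : ℝ) : ℂ) * Complex.I *
        (((ξ.1 : ℝ) : ℂ) * (Real.cos θ : ℂ) + ((ξ.2 : ℝ) : ℂ) * (Real.sin θ : ℂ))) with hG
  have hfG : ∀ θ, (f (p θ) : ℂ) = G θ := by
    intro θ
    rw [ha (p θ), hG]
    refine Finset.sum_congr rfl fun ξ _ => ?_
    rw [hp0, hp1, mul_assoc (a ξ) (Complex.exp _) (Complex.exp _), ← Complex.exp_add]
    congr 2
    push_cast
    ring
  have hGcont : Continuous G := by
    rw [hG]
    refine continuous_finset_sum _ fun ξ _ => ?_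
    exact Continuous.mul continuous_const (Complex.continuous_exp.comp (by fun_prop))
  have hreG : ∀ θ, f (p θ) = (G θ).re := by
    intro θ; rw [← hfG θ, Complex.ofReal_re]
  have hcont : Continuous fun θ => f (p θ) :=
    (Complex.continuous_re.comp hGcont).congr fun θ => (hreG θ).symm
  -- the integral of G over a period is a multiple of f z = 0
  have hEcast : ∀ ξ ∈ latticeE E, ((ξ.1 : ℝ)) ^ 2 + ((ξ.2 : ℝ)) ^ 2 = (Real.sqrt E) ^ 2 := by
    intro ξ hξ
    have h2 : ξ.1 ^ 2 + ξ.2 ^ 2 = (E : ℤ) := (Finset.mem_filter.mp hξ).2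
    rw [Real.sq_sqrt (Nat.cast_nonneg E)]
    exact_mod_cast congrArg (fun n : ℤ => (n : ℝ)) h2
  have hGint : (∫ θ in (0:ℝ)..(2 * Real.pi), G θ) = 0 := by
    simp only [hG]
    rw [intervalIntegral.integral_finset_sum (fun ξ _ => by
      exact (Continuous.intervalIntegrable (by
        exact Continuous.mul continuous_const
          (Complex.continuous_exp.comp (by fun_prop))) _ _))]
    have : ∀ ξ ∈ latticeE E,
        (∫ θ in (0:ℝ)..(2 * Real.pi),
          (a ξ * Complex.exp (2 * Real.pi * Complex.I *
            (((ξ.1 : ℝ) : ℂ) * ((z 0 : ℝ) : ℂ) + ((ξ.2 : ℝ) : ℂ) * ((z 1 : ℝ) : ℂ)))) *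
          Complex.exp (((2 * Real.pi * s : ℝ) : ℂ) * Complex.I *
            (((ξ.1 : ℝ) : ℂ) * (Real.cos θ : ℂ) + ((ξ.2 : ℝ) : ℂ) * (Real.sin θ : ℂ))))
        = (a ξ * Complex.exp (2 * Real.pi * Complex.I *
            (((ξ.1 : ℝ) : ℂ) * ((z 0 : ℝ) : ℂ) + ((ξ.2 : ℝ) : ℂ) * ((z 1 : ℝ) : ℂ)))) *
          ∫ θ in (0:ℝ)..(2 * Real.pi),
            Complex.exp (((2 * Real.pi * s : ℝ) : ℂ) * Complex.I *
              ((Real.sqrt E : ℂ) * (Real.cos θ : ℂ))) := by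
      intro ξ hξ
      rw [intervalIntegral.integral_const_mul,
        circleIntegral_rot (2 * Real.pi * s) (Real.sqrt E) (Real.sqrt_nonneg E)
          (ξ.1 : ℝ) (ξ.2 : ℝ) (hEcast ξ hξ)]
    rw [Finset.sum_congr rfl this, ← Finset.sum_mul]
    have hz' : (∑ ξ ∈ latticeE E, a ξ * Complex.exp (2 * Real.pi * Complex.I *
        (((ξ.1 : ℝ) : ℂ) * ((z 0 : ℝ) : ℂ) + ((ξ.2 : ℝ) : ℂ) * ((z 1 : ℝ) : ℂ)))) = 0 := by
      have := (ha z).symm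
      rw [hz] at this
      push_cast at this ⊢
      rw [this]
    rw [hz', zero_mul]
  -- hence the real circle average vanishes
  have hfint : (∫ θ in (0:ℝ)..(2 * Real.pi), f (p θ)) = 0 := by
    have : ((∫ θ in (0:ℝ)..(2 * Real.pi), f (p θ) : ℝ) : ℂ)
        = ∫ θ in (0:ℝ)..(2 * Real.pi), ((f (p θ) : ℝ) : ℂ) :=
      intervalIntegral.integral_ofReal.symm
    rw [intervalIntegral.integral_congr (fun θ _ => hfG θ), hGint] at this
    exact_mod_cast this
  -- a continuous function with zero mean has a zero
  by_contra hno
  push_neg at hno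
  have hne : ∀ θ : ℝ, f (p θ) ≠ 0 := fun θ => hno (p θ) (hdist θ)
  have h2pi : (0:ℝ) < 2 * Real.pi := by positivity
  rcases (hne 0).lt_or_gt with hneg | hpos
  · -- everywhere negative
    have hall : ∀ θ : ℝ, f (p θ) < 0 := by
      intro θ
      rcases (hne θ).lt_or_gt with h | h
      · exact h
      · exfalso
        have h0 : (0:ℝ) ∈ Set.uIcc (f (p 0)) (f (p θ)) :=
          Set.mem_uIcc.mpr (Or.inl ⟨hneg.le, h.le⟩)
        obtain ⟨θ', -, hθ'⟩ := intermediate_value_uIcc (hcont.continuousOn (s := Set.uIcc 0 θ)) h0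
        exact hne θ' hθ'
    have : (0:ℝ) < ∫ θ in (0:ℝ)..(2 * Real.pi), -f (p θ) :=
      intervalIntegral.intervalIntegral_pos_of_pos_on (hcont.neg.intervalIntegrable _ _)
        (fun θ _ => by simpa using hall θ) h2pi
    rw [intervalIntegral.integral_neg, hfint] at this
    simp at this
  · -- everywhere positive
    have hall : ∀ θ : ℝ, 0 < f (p θ) := by
      intro θ
      rcases (hne θ).lt_or_gt with h | h
      · exfalso
        have h0 : (0:ℝ) ∈ Set.uIcc (f (p 0)) (f (p θ)) :=
          Set.mem_uIcc.mpr (Or.inr ⟨h.le, hpos.le⟩)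
        obtain ⟨θ', -, hθ'⟩ := intermediate_value_uIcc (hcont.continuousOn (s := Set.uIcc 0 θ)) h0
        exact hne θ' hθ'
      · exact h
    have : (0:ℝ) < ∫ θ in (0:ℝ)..(2 * Real.pi), f (p θ) :=
      intervalIntegral.intervalIntegral_pos_of_pos_on (hcont.intervalIntegrable _ _)
        (fun θ _ => hall θ) h2pi
    rw [hfint] at this
    exact lt_irrefl _ this

/-- Local lower bound for the nodal length around a zero: there are absolute constants
`c₁, c₂ > 0` such that if a toral eigenfunction `f` of frequency `E ≥ 1` vanishes at `z`,
then the nodal length of `f` in `B(z, c₁/√E)` is at least `c₂/√E`. -/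
theorem nodal_length_near_zero :
    ∃ c₁ : ℝ, 0 < c₁ ∧ ∃ c₂ : ℝ, 0 < c₂ ∧
      ∀ E : ℕ, 1 ≤ E →
        ∀ f : EuclideanSpace ℝ (Fin 2) → ℝ, IsToralEigenfunction E f →
          ∀ z : EuclideanSpace ℝ (Fin 2), f z = 0 →
            ENNReal.ofReal (c₂ / Real.sqrt E)
              ≤ μH[1] {x : EuclideanSpace ℝ (Fin 2) |
                  x ∈ ball z (c₁ / Real.sqrt E) ∧ f x = 0} := by
  refine ⟨1, one_pos, 1, one_pos, fun E hE f hf z hz => ?_⟩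
  set r : ℝ := 1 / Real.sqrt E with hr
  have hE0 : (0:ℝ) < E := by exact_mod_cast hE
  have hrpos : 0 < r := by rw [hr]; positivity
  set Z : Set (EuclideanSpace ℝ (Fin 2)) := {x | x ∈ ball z r ∧ f x = 0} with hZ
  have hsub : Set.Ico (0:ℝ) r ⊆ (fun x => dist x z) '' Z := by
    rintro s ⟨hs0, hsr⟩
    rcases eq_or_lt_of_le hs0 with h | h
    · exact ⟨z, ⟨mem_ball_self hrpos, hz⟩, by simp [← h]⟩
    · obtain ⟨x, hdx, hfx⟩ := zero_on_circle E f hf z hz s h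
      exact ⟨x, ⟨by rw [mem_ball, hdx]; exact hsr, hfx⟩, hdx⟩
  calc ENNReal.ofReal (1 / Real.sqrt E)
      = μH[1] (Set.Ico (0:ℝ) r) := by
        rw [MeasureTheory.hausdorffMeasure_real, Real.volume_Ico, sub_zero]
    _ ≤ μH[1] ((fun x => dist x z) '' Z) := measure_mono hsub
    _ ≤ μH[1] Z := by
        simpa using (LipschitzWith.dist_left z).hausdorffMeasure_image_le zero_le_one Z
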